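/- arXiv:1902.00767 — 4 statements merged into one kernel-verified Lean document; each statement's English description precedes it below -/
import Mathlib

section
/- Let k be a field, m, d natural numbers, and a₀, a₁, …, a_d ∈ k distinct elements. Let T^{m+1} = {(a_{t₁}, …, a_{t_{m+1}}) : 0 ≤ t_{m+1} ≤ t_m ≤ … ≤ t₁ ≤ d}. If Q(x₁, …, x_{m+1}) is a polynomial of total degree ≤ d vanishing on T^{m+1}, then Q = 0. -/
open MvPolynomial Polynomial

lemma finsupp_sum_eq {n : ℕ} (m : Fin n →₀ ℕ) : (m.sum fun _ e => e) = ∑ i, m i :=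
  Finsupp.sum_fintype _ _ (fun _ => rfl)

/-- bridge between mv-eval and the finSuccEquiv picture -/
lemma bridge_eval {k : Type*} [CommSemiring k] {n : ℕ} (Q : MvPolynomial (Fin (n+1)) k)
    (c : k) (s : Fin n → k) :
    MvPolynomial.eval (Fin.cons c s) Q =
      MvPolynomial.eval s (Polynomial.eval (MvPolynomial.C c) (MvPolynomial.finSuccEquiv k n Q)) := by
  rw [MvPolynomial.eval_eq_eval_mv_eval', Polynomial.eval_map]
  have h := Polynomial.eval₂_at_apply (p := MvPolynomial.finSuccEquiv k n Q)
    (MvPolynomial.eval s) (MvPolynomial.C c)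
  rw [MvPolynomial.eval_C] at h
  exact h

/-- converse total degree bound through finSuccEquiv -/
lemma aux1 {k : Type*} [CommSemiring k] {n D : ℕ}
    (G : Polynomial (MvPolynomial (Fin n) k))
    (h : ∀ i, G.coeff i ≠ 0 → (G.coeff i).totalDegree + i ≤ D) :
    ((MvPolynomial.finSuccEquiv k n).symm G).totalDegree ≤ D := by
  set Q' := (MvPolynomial.finSuccEquiv k n).symm G with hQ'
  have hFG : MvPolynomial.finSuccEquiv k n Q' = G :=
    (MvPolynomial.finSuccEquiv k n).apply_symm_apply G
  apply Finset.sup_le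
  intro m hm
  have hcm : MvPolynomial.coeff m Q' ≠ 0 := MvPolynomial.mem_support_iff.mp hm
  have h1 : MvPolynomial.coeff m.tail (G.coeff (m 0)) ≠ 0 := by
    rw [← hFG, MvPolynomial.finSuccEquiv_coeff_coeff, Finsupp.cons_tail]
    exact hcm
  have h2 : G.coeff (m 0) ≠ 0 := fun h0 => h1 (by simp [h0])
  have h3 : (m.tail.sum fun _ e => e) ≤ (G.coeff (m 0)).totalDegree :=
    MvPolynomial.le_totalDegree (MvPolynomial.mem_support_iff.mpr h1)
  have h4 := h (m 0) h2
  have h5 : (m.sum fun _ e => e) = m 0 + (m.tail.sum fun _ e => e) := by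
    rw [finsupp_sum_eq, finsupp_sum_eq, Fin.sum_univ_succ]
    simp [Finsupp.tail_apply]
  omega

/-- coefficient degree bound for the quotient by X - C c -/
lemma aux2 {k : Type*} [CommRing k] {n D : ℕ} (c : k)
    (G : Polynomial (MvPolynomial (Fin n) k))
    (hdegG : G.natDegree ≤ D)
    (hF : ∀ i, ((Polynomial.X - Polynomial.C (MvPolynomial.C c)) * G).coeff i ≠ 0 →
      (((Polynomial.X - Polynomial.C (MvPolynomial.C c)) * G).coeff i).totalDegree + i ≤ D + 1) :
    ∀ i, G.coeff i ≠ 0 → (G.coeff i).totalDegree + i ≤ D := by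
  set F := (Polynomial.X - Polynomial.C (MvPolynomial.C c)) * G with hFdef
  have hcoeff : ∀ i, F.coeff (i+1) = G.coeff i - MvPolynomial.C c * G.coeff (i+1) := by
    intro i
    rw [hFdef, sub_mul, Polynomial.coeff_sub, Polynomial.coeff_X_mul, Polynomial.coeff_C_mul]
  have key : ∀ j i, G.natDegree ≤ i + j → G.coeff i ≠ 0 → (G.coeff i).totalDegree + i ≤ D := by
    intro j
    induction j with
    | zero =>
      intro i hle hne
      have hz : G.coeff (i+1) = 0 := Polynomial.coeff_eq_zero_of_natDegree_lt (by omega)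
      have hFc : F.coeff (i+1) = G.coeff i := by rw [hcoeff i, hz, mul_zero, sub_zero]
      have hb := hF (i+1) (by rw [hFc]; exact hne)
      rw [hFc] at hb
      omega
    | succ j ihj =>
      intro i hle hne
      by_cases hz : G.coeff (i+1) = 0
      · have hFc : F.coeff (i+1) = G.coeff i := by rw [hcoeff i, hz, mul_zero, sub_zero]
        have hb := hF (i+1) (by rw [hFc]; exact hne)
        rw [hFc] at hb
        omega
      · have hb := ihj (i+1) (by omega) hz
        have hrel : G.coeff i = F.coeff (i+1) + MvPolynomial.C c * G.coeff (i+1) := by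
          rw [hcoeff i]; ring
        have hta : (G.coeff i).totalDegree ≤
            max (F.coeff (i+1)).totalDegree (MvPolynomial.C c * G.coeff (i+1)).totalDegree := by
          rw [hrel]; exact MvPolynomial.totalDegree_add _ _
        have htb : (MvPolynomial.C c * G.coeff (i+1)).totalDegree ≤ (G.coeff (i+1)).totalDegree :=
          le_trans (MvPolynomial.totalDegree_mul _ _) (by simp [MvPolynomial.totalDegree_C])
        have hid : i ≤ D := le_trans (Polynomial.le_natDegree_of_ne_zero hne) hdegG
        have hFA : (F.coeff (i+1)).totalDegree + (i+1) ≤ D + 1 := by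
          by_cases hf : F.coeff (i+1) = 0
          · rw [hf, MvPolynomial.totalDegree_zero]; omega
          · exact hF (i+1) hf
        rcases le_max_iff.mp hta with h | h
        · omega
        · have := le_trans h htb; omega
  intro i
  exact key G.natDegree i (by omega)

lemma aux_main {k : Type*} [Field k] : ∀ (d : ℕ) (n : ℕ) (a : Fin (d+1) → k),
    Function.Injective a →
    ∀ Q : MvPolynomial (Fin n) k, Q.totalDegree ≤ d →
    (∀ t : Fin n → Fin (d+1), (∀ i j, i ≤ j → t j ≤ t i) →
      MvPolynomial.eval (fun i => a (t i)) Q = 0) → Q = 0 := by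
  intro d
  induction d with
  | zero =>
    intro n a ha Q hdeg hvan
    have h0 : Q = MvPolynomial.C (MvPolynomial.coeff 0 Q) := by
      ext m
      by_cases hm : m = 0
      · subst hm; simp
      · rw [MvPolynomial.coeff_C, if_neg (Ne.symm hm)]
        by_contra hc
        have hmem : m ∈ Q.support := MvPolynomial.mem_support_iff.mpr hc
        have := (MvPolynomial.totalDegree_eq_zero_iff _ Q).mp (Nat.le_zero.mp hdeg) m hmem
        exact hm (Finsupp.ext this)
    have hv := hvan (fun _ => 0) (fun i j _ => le_refl _)
    rw [h0, MvPolynomial.eval_C] at hv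
    rw [h0, hv, map_zero]
  | succ d ih =>
    intro n
    induction n with
    | zero =>
      intro a ha Q hdeg hvan
      obtain ⟨q, rfl⟩ := MvPolynomial.C_surjective (Fin 0) Q
      have hv := hvan (fun i => i.elim0) (fun i => i.elim0)
      rw [MvPolynomial.eval_C] at hv
      rw [hv, map_zero]
    | succ n ihn =>
      intro a ha Q hdeg hvan
      set F := MvPolynomial.finSuccEquiv k n Q with hFdef
      set c : k := a (Fin.last (d+1)) with hc
      -- the restriction to x₀ = c vanishes
      have hres : Polynomial.eval (MvPolynomial.C c) F = 0 := by
        apply ihn a ha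
        · -- total degree bound
          rw [Polynomial.eval_eq_sum_range]
          refine le_trans (MvPolynomial.totalDegree_finset_sum _ _) (Finset.sup_le ?_)
          intro i _
          by_cases hc0 : F.coeff i = 0
          · simp [hc0]
          · refine le_trans (MvPolynomial.totalDegree_mul _ _) ?_
            have h1 : ((MvPolynomial.C c : MvPolynomial (Fin n) k) ^ i).totalDegree = 0 := by
              rw [← map_pow, MvPolynomial.totalDegree_C]
            have h2 := MvPolynomial.totalDegree_coeff_finSuccEquiv_add_le Q i (by rw [← hFdef]; exact hc0)
            rw [← hFdef] at h2
            rw [h1]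
            omega
        · -- vanishing
          intro t ht
          have hpt : (fun i => a ((Fin.cons (Fin.last (d+1)) t : Fin (n+1) → Fin (d+2)) i))
              = Fin.cons c (fun i => a (t i)) := by
            funext i
            refine Fin.cases ?_ (fun i' => ?_) i
            · simp [hc]
            · simp
          have hch : ∀ i j : Fin (n+1), i ≤ j →
              (Fin.cons (Fin.last (d+1)) t : Fin (n+1) → Fin (d+2)) j
                ≤ (Fin.cons (Fin.last (d+1)) t : Fin (n+1) → Fin (d+2)) i := by
            intro i j hij
            rcases Fin.eq_zero_or_eq_succ i with rfl | ⟨i', rfl⟩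
            · rw [Fin.cons_zero]; exact Fin.le_last _
            · rcases Fin.eq_zero_or_eq_succ j with rfl | ⟨j', rfl⟩
              · exact (Fin.succ_ne_zero i' (Fin.le_zero_iff.mp hij)).elim
              · rw [Fin.cons_succ, Fin.cons_succ]
                exact ht i' j' (by rwa [Fin.succ_le_succ_iff] at hij)
          have hv := hvan _ hch
          rw [hpt, bridge_eval] at hv
          exact hv
      -- factor
      obtain ⟨G, hFG⟩ : (Polynomial.X - Polynomial.C (MvPolynomial.C c)) ∣ F :=
        Polynomial.dvd_iff_isRoot.mpr hres
      by_cases hG0 : G = 0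
      · apply (MvPolynomial.finSuccEquiv k n).injective
        rw [← hFdef, hFG, hG0, mul_zero, map_zero]
      · -- degree bound on G
        have hdF : F.natDegree ≤ d + 1 := by
          rw [hFdef, MvPolynomial.natDegree_finSuccEquiv]
          exact le_trans (MvPolynomial.degreeOf_le_totalDegree Q 0) hdeg
        have hdG : G.natDegree ≤ d := by
          have h1 : F.natDegree = 1 + G.natDegree := by
            rw [hFG, Polynomial.natDegree_mul (Polynomial.X_sub_C_ne_zero _) hG0,
              Polynomial.natDegree_X_sub_C]
          omega
        have hFcb : ∀ i, ((Polynomial.X - Polynomial.C (MvPolynomial.C c)) * G).coeff i ≠ 0 →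
            (((Polynomial.X - Polynomial.C (MvPolynomial.C c)) * G).coeff i).totalDegree + i ≤ d + 1 := by
          intro i hi
          rw [← hFG] at hi ⊢
          exact le_trans (MvPolynomial.totalDegree_coeff_finSuccEquiv_add_le Q i
            (by rw [← hFdef]; exact hi)) hdeg
        have hGcb := aux2 c G hdG hFcb
        set Q' := (MvPolynomial.finSuccEquiv k n).symm G with hQ'def
        have hQ'G : MvPolynomial.finSuccEquiv k n Q' = G :=
          (MvPolynomial.finSuccEquiv k n).apply_symm_apply G
        have hdeg' : Q'.totalDegree ≤ d := aux1 G hGcb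
        -- vanishing of Q' on the truncated grid
        have hvan' : ∀ t : Fin (n+1) → Fin (d+1), (∀ i j, i ≤ j → t j ≤ t i) →
            MvPolynomial.eval (fun i => a ((t i).castSucc)) Q' = 0 := by
          intro t ht
          set T : Fin (n+1) → Fin (d+2) := fun i => (t i).castSucc with hT
          have hchT : ∀ i j, i ≤ j → T j ≤ T i := by
            intro i j hij
            simpa [hT, Fin.castSucc_le_castSucc_iff] using ht i j hij
          have hv := hvan T hchT
          rw [← Fin.cons_self_tail (fun i => a (T i)), bridge_eval] at hv
          rw [← hFdef, hFG] at hv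
          rw [Polynomial.eval_mul] at hv
          have heq : Polynomial.eval (MvPolynomial.C (a (T 0)) : MvPolynomial (Fin n) k)
              (Polynomial.X - Polynomial.C (MvPolynomial.C c))
              = MvPolynomial.C (a (T 0) - c) := by
            simp [map_sub]
          rw [heq, map_mul, MvPolynomial.eval_C] at hv
          have hne : a (T 0) - c ≠ 0 := by
            intro h0
            have : a (T 0) = c := sub_eq_zero.mp h0
            have := ha this
            exact absurd this (Fin.ne_of_lt (Fin.castSucc_lt_last (t 0)))
          have hv2 : MvPolynomial.eval (Fin.tail fun i => a (T i))
              (Polynomial.eval (MvPolynomial.C (a (T 0))) G) = 0 := by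
            rcases mul_eq_zero.mp hv with h | h
            · exact absurd h hne
            · exact h
          have := (bridge_eval Q' (a (T 0)) (Fin.tail fun i => a (T i)))
          rw [hQ'G, hv2] at this
          have hfin : (fun i => a ((t i).castSucc)) =
              Fin.cons (a (T 0)) (Fin.tail fun i => a (T i)) :=
            (Fin.cons_self_tail (fun i => a (T i))).symm
          rw [hfin, this]
        have hQ'0 : Q' = 0 := by
          apply ih (n+1) (fun i => a i.castSucc)
            (fun x y hxy => Fin.castSucc_injective _ (ha hxy)) Q' hdeg'
          intro t ht
          exact hvan' t ht
        have : G = 0 := by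
          rw [← hQ'G, hQ'0, map_zero]
        exact absurd this hG0

/-- If a₀,…,a_d are distinct elements of a field k and
Q ∈ k[x₁,…,x_{m+1}] has total degree ≤ d and vanishes at all points
(a_{t₁},…,a_{t_{m+1}}) with d ≥ t₁ ≥ t₂ ≥ … ≥ t_{m+1} ≥ 0, then Q = 0. -/
theorem stmt2 {k : Type*} [Field k] (m d : ℕ) (a : Fin (d + 1) → k)
    (ha : Function.Injective a)
    (Q : MvPolynomial (Fin (m + 1)) k) (hdeg : Q.totalDegree ≤ d)
    (hvan : ∀ t : Fin (m + 1) → Fin (d + 1),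
      (∀ i j : Fin (m + 1), i ≤ j → t j ≤ t i) →
      MvPolynomial.eval (fun i => a (t i)) Q = 0) :
    Q = 0 :=
  aux_main d (m+1) a ha Q hdeg hvan
end

section
/- Let k be a field with |k| > a, let Z ⊆ V be a subset of a k-vector space V that is closed under scalar multiplication (homogeneous: z ∈ Z, t ∈ k implies tz ∈ Z), and let f : Z → k be the restriction of a polynomial of degree ≤ a on V. If the restriction of f to every affine line contained in Z is a polynomial of degree < a, then f is the restriction to Z of a polynomial of degree < a on V. -/
open MvPolynomial

lemma eval_smul_of_isHomogeneous {k : Type*} [CommSemiring k] {n : Type*}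
    {φ : MvPolynomial n k} {d : ℕ} (hφ : φ.IsHomogeneous d) (t : k) (z : n → k) :
    MvPolynomial.eval (t • z) φ = t ^ d * MvPolynomial.eval z φ := by
  classical
  rw [eval_eq, eval_eq, Finset.mul_sum]
  apply Finset.sum_congr rfl
  intro m hm
  rw [mem_support_iff] at hm
  have hdm : (m.sum fun _ e => e) = d := by
    have := hφ hm
    simpa [Finsupp.weight_apply, Finsupp.sum] using this
  have : ∀ i ∈ m.support, (t • z) i ^ m i = t ^ m i * z i ^ m i := by
    intro i _; simp [mul_pow]
  rw [Finset.prod_congr rfl this, Finset.prod_mul_distrib, Finset.prod_pow_eq_pow_sum]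
  have : ∑ i ∈ m.support, m i = d := by simpa [Finsupp.sum] using hdm
  rw [this]; ring

/-- Let k be a field with |k| > a, Z ⊆ k^n a cone (closed under scalar
multiplication), and f the restriction to Z of a polynomial P of degree ≤ a.
If the restriction of f to every affine line contained in Z is a polynomial of degree
< a in the line parameter, then f is the restriction to Z of a polynomial of degree < a. -/
theorem stmt4 {k : Type*} [Field k] (n a : ℕ) (ha : 1 ≤ a)
    (hk : ∃ s : Finset k, a < s.card)
    (Z : Set (Fin n → k)) (hcone : ∀ z ∈ Z, ∀ t : k, t • z ∈ Z)
    (P : MvPolynomial (Fin n) k) (hdeg : P.totalDegree ≤ a)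
    (hweak : ∀ v w : Fin n → k, w ≠ 0 → (∀ t : k, v + t • w ∈ Z) →
      ∃ p : Polynomial k, p.natDegree < a ∧
        ∀ t : k, Polynomial.eval t p = MvPolynomial.eval (v + t • w) P) :
    ∃ P' : MvPolynomial (Fin n) k, P'.totalDegree < a ∧
      ∀ z ∈ Z, MvPolynomial.eval z P' = MvPolynomial.eval z P := by
  classical
  -- P is the sum of its homogeneous components up to degree a
  have hPsum : ∑ d ∈ Finset.range (a + 1), homogeneousComponent d P = P := by
    refine (Finset.sum_subset ?_ ?_).symm.trans (sum_homogeneousComponent P)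
    · intro d hd
      simp only [Finset.mem_range] at hd ⊢
      omega
    · intro d _ hd
      simp only [Finset.mem_range, not_lt] at hd
      exact homogeneousComponent_eq_zero d P (by omega)
  refine ⟨∑ d ∈ Finset.range a, homogeneousComponent d P, ?_, ?_⟩
  · apply lt_of_le_of_lt (totalDegree_finset_sum _ _)
    rw [Finset.sup_lt_iff (by simpa using Nat.lt_of_lt_of_le Nat.zero_lt_one ha)]
    intro d hd
    simp only [Finset.mem_range] at hd
    exact lt_of_le_of_lt (homogeneousComponent_isHomogeneous d P).totalDegree_le hd
  · intro z hz
    -- key claim: the degree-a homogeneous component of P vanishes at z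
    have key : MvPolynomial.eval z (homogeneousComponent a P) = 0 := by
      by_cases hz0 : z = 0
      · subst hz0
        have h0 : (0 : Fin n → k) = (0 : k) • (0 : Fin n → k) := by simp
        rw [h0, eval_smul_of_isHomogeneous (homogeneousComponent_isHomogeneous a P),
          zero_pow (by omega), zero_mul]
      · obtain ⟨p, hpdeg, hpeval⟩ := hweak 0 z hz0 (fun t => by simpa using hcone z hz t)
        -- q : polynomial in t equal to eval (t • z) P
        set q : Polynomial k := ∑ d ∈ Finset.range (a + 1),
          Polynomial.C (MvPolynomial.eval z (homogeneousComponent d P)) * Polynomial.X ^ d with hq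
        have hqeval : ∀ t : k, Polynomial.eval t q = MvPolynomial.eval (t • z) P := by
          intro t
          rw [hq]
          simp only [Polynomial.eval_finset_sum, Polynomial.eval_mul, Polynomial.eval_C,
            Polynomial.eval_pow, Polynomial.eval_X]
          conv_rhs => rw [← hPsum]
          rw [map_sum]
          apply Finset.sum_congr rfl
          intro d _
          rw [eval_smul_of_isHomogeneous (homogeneousComponent_isHomogeneous d P)]
          ring
        have hqdeg : q.natDegree ≤ a := by
          apply Polynomial.natDegree_sum_le_of_forall_le
          intro d hd
          simp only [Finset.mem_range] at hd
          apply le_trans (Polynomial.natDegree_C_mul_le _ _)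
          simpa using Nat.lt_succ_iff.mp hd
        obtain ⟨s, hs⟩ := hk
        have hqp : q - p = 0 := by
          apply Polynomial.eq_zero_of_natDegree_lt_card_of_eval_eq_zero' _ s
          · intro t _
            rw [Polynomial.eval_sub, hqeval, hpeval]
            simp [sub_eq_zero]
          · calc (q - p).natDegree ≤ max q.natDegree p.natDegree :=
                  Polynomial.natDegree_sub_le _ _
              _ ≤ a := max_le hqdeg (le_of_lt hpdeg)
              _ < s.card := hs
        have hq_eq : q = p := by rwa [sub_eq_zero] at hqp
        have hcoeff : q.coeff a = 0 := by
          rw [hq_eq]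
          exact Polynomial.coeff_eq_zero_of_natDegree_lt hpdeg
        rw [hq] at hcoeff
        simp only [Polynomial.finset_sum_coeff, Polynomial.coeff_C_mul,
          Polynomial.coeff_X_pow] at hcoeff
        rw [Finset.sum_eq_single a] at hcoeff
        · simpa using hcoeff
        · intro d _ hd
          simp [Ne.symm hd]
        · intro h
          exact absurd (Finset.self_mem_range_succ a) h
    conv_rhs => rw [← hPsum]
    rw [map_sum, map_sum, Finset.sum_range_succ, key, add_zero]
end

section
/- Let k = 𝔽_q be a finite field and Q ∈ k[x,y,z] a nonzero homogeneous polynomial of degree a. Let C_Q be the set of 1-dimensional linear subspaces L ⊆ k³ such that Q restricted to L is identically zero. Then |C_Q| ≤ a(q+1). -/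
open MvPolynomial
open scoped LinearAlgebra.Projectivization

section Aux

lemma stmt5_proj_card_mul {K V : Type*} [Field K] [Fintype K] [AddCommGroup V] [Module K V]
    [Fintype V] [Nontrivial V] :
    Nat.card (ℙ K V) * (Fintype.card K - 1) = Fintype.card V - 1 := by
  classical
  haveI : Finite (ℙ K V) :=
    inferInstanceAs (Finite (Quotient (projectivizationSetoid K V)))
  haveI : Fintype (ℙ K V) := Fintype.ofFinite _
  have e2 : ∀ L : ℙ K V, {v : {v : V // v ≠ 0} // Projectivization.mk' K v = L} ≃ Kˣ := by
    intro L
    have hmk : ∀ u : Kˣ, Projectivization.mk' K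
        ⟨(u : K) • L.rep, smul_ne_zero u.ne_zero L.rep_nonzero⟩ = L := by
      intro u
      rw [Projectivization.mk'_eq_mk]
      conv_rhs => rw [← L.mk_rep]
      rw [Projectivization.mk_eq_mk_iff]
      exact ⟨u, rfl⟩
    refine (Equiv.ofBijective
      (fun u : Kˣ => ⟨⟨(u : K) • L.rep, smul_ne_zero u.ne_zero L.rep_nonzero⟩, hmk u⟩)
      ⟨?_, ?_⟩).symm
    · intro u u' h
      simp only [Subtype.mk.injEq] at h
      exact Units.ext (smul_left_injective K L.rep_nonzero h)
    · rintro ⟨⟨v, hv⟩, hL⟩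
      rw [Projectivization.mk'_eq_mk] at hL
      conv_rhs at hL => rw [← L.mk_rep]
      rw [Projectivization.mk_eq_mk_iff] at hL
      obtain ⟨u, hu⟩ := hL
      exact ⟨u, Subtype.ext (Subtype.ext (by simpa [Units.smul_def] using hu))⟩
  have e1 : {v : V // v ≠ 0} ≃ Σ _L : ℙ K V, Kˣ :=
    (Equiv.sigmaFiberEquiv (Projectivization.mk' K)).symm.trans
      (Equiv.sigmaCongrRight e2)
  have h1 : Fintype.card {v : V // v ≠ 0} = Fintype.card (ℙ K V) * (Fintype.card K - 1) := by
    rw [Fintype.card_congr e1, Fintype.card_sigma]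
    simp [Fintype.card_units, Finset.sum_const, mul_comm]
  have h2 : Fintype.card {v : V // v ≠ 0} = Fintype.card V - 1 := by
    rw [Fintype.card_subtype_compl, Fintype.card_subtype_eq]
  rw [Nat.card_eq_fintype_card, ← h1, h2]

lemma stmt5_eq_of_common {K V' : Type*} [Field K] [AddCommGroup V'] [Module K V']
    {L L' : ℙ K V'} {v : V'} (hv : v ≠ 0)
    (h1 : v ∈ L.submodule) (h2 : v ∈ L'.submodule) : L = L' := by
  have key : ∀ M : ℙ K V', v ∈ M.submodule → Projectivization.mk K v hv = M := by
    intro M hM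
    rw [Projectivization.submodule_eq, Submodule.mem_span_singleton] at hM
    obtain ⟨t, ht⟩ := hM
    have ht0 : t ≠ 0 := by rintro rfl; exact hv (by rw [← ht, zero_smul])
    conv_rhs => rw [← M.mk_rep]
    rw [Projectivization.mk_eq_mk_iff]
    exact ⟨Units.mk0 t ht0, by simpa [Units.smul_def] using ht⟩
  rw [← key L h1, key L' h2]

variable {k : Type*} [Field k]

lemma stmt5_aux_eval (Q : MvPolynomial (Fin 3) k) (p w : Fin 3 → k) (s : k) :
    Polynomial.eval s (MvPolynomial.aeval
      (fun i => Polynomial.C (w i) + Polynomial.C (p i) * Polynomial.X) Q)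
      = MvPolynomial.eval (w + s • p) Q := by
  rw [MvPolynomial.aeval_def]
  have h := MvPolynomial.eval₂_comp_left (Polynomial.evalRingHom s)
    (algebraMap k (Polynomial k))
    (fun i => Polynomial.C (w i) + Polynomial.C (p i) * Polynomial.X) Q
  simp only [Polynomial.coe_evalRingHom] at h
  rw [h, show ((Polynomial.evalRingHom s).comp (algebraMap k (Polynomial k))) = RingHom.id k by
      ext c; simp,
    show (Polynomial.eval s ∘ fun i => Polynomial.C (w i) + Polynomial.C (p i) * Polynomial.X)
      = (w + s • p) by
        funext i
        simp only [Function.comp_apply, Polynomial.eval_add, Polynomial.eval_C,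
          Polynomial.eval_mul, Polynomial.eval_X, Pi.add_apply, Pi.smul_apply, smul_eq_mul]
        ring]
  rw [MvPolynomial.eval₂_id]

lemma stmt5_sum_d (Q : MvPolynomial (Fin 3) k) {a : ℕ} (hhom : Q.IsHomogeneous a)
    {d : Fin 3 →₀ ℕ} (hd : MvPolynomial.coeff d Q ≠ 0) : ∑ i, d i = a := by
  have h := hhom hd
  simp only [Finsupp.weight_apply, Pi.one_apply, smul_eq_mul, mul_one] at h
  rw [← h, Finsupp.sum_fintype _ _ (fun i => rfl)]

lemma stmt5_base_deg (p w : Fin 3 → k) (i : Fin 3) :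
    (Polynomial.C (w i) + Polynomial.C (p i) * Polynomial.X).natDegree ≤ 1 :=
  le_trans (Polynomial.natDegree_add_le _ _)
    (max_le (by simp) (le_trans (Polynomial.natDegree_C_mul_le _ _) (by simp)))

lemma stmt5_pow_deg (p w : Fin 3 → k) (i : Fin 3) (n : ℕ) :
    ((Polynomial.C (w i) + Polynomial.C (p i) * Polynomial.X) ^ n).natDegree ≤ n := by
  refine le_trans Polynomial.natDegree_pow_le ?_
  calc n * (Polynomial.C (w i) + Polynomial.C (p i) * Polynomial.X).natDegree
      ≤ n * 1 := Nat.mul_le_mul_left _ (stmt5_base_deg p w i)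
    _ = n := mul_one _

lemma stmt5_aux_deg (Q : MvPolynomial (Fin 3) k) {a : ℕ} (hhom : Q.IsHomogeneous a)
    (p w : Fin 3 → k) :
    (MvPolynomial.aeval
      (fun i => Polynomial.C (w i) + Polynomial.C (p i) * Polynomial.X) Q).natDegree ≤ a := by
  rw [MvPolynomial.aeval_def, MvPolynomial.eval₂_eq']
  apply Polynomial.natDegree_sum_le_of_forall_le
  intro d hd
  have hda : ∑ i, d i = a := stmt5_sum_d Q hhom (MvPolynomial.mem_support_iff.mp hd)
  calc (algebraMap k (Polynomial k) (MvPolynomial.coeff d Q) *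
        ∏ i, (Polynomial.C (w i) + Polynomial.C (p i) * Polynomial.X) ^ d i).natDegree
      ≤ (∏ i, (Polynomial.C (w i) + Polynomial.C (p i) * Polynomial.X) ^ d i).natDegree := by
        exact Polynomial.natDegree_C_mul_le _ _
    _ ≤ ∑ i, ((Polynomial.C (w i) + Polynomial.C (p i) * Polynomial.X) ^ d i).natDegree :=
        Polynomial.natDegree_prod_le _ _
    _ ≤ ∑ i, d i := by gcongr with i hi; exact stmt5_pow_deg p w i (d i)
    _ = a := hda

lemma stmt5_aux_coeff (Q : MvPolynomial (Fin 3) k) {a : ℕ} (hhom : Q.IsHomogeneous a)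
    (p w : Fin 3 → k) :
    (MvPolynomial.aeval
      (fun i => Polynomial.C (w i) + Polynomial.C (p i) * Polynomial.X) Q).coeff a
      = MvPolynomial.eval p Q := by
  rw [MvPolynomial.aeval_def, MvPolynomial.eval₂_eq', Polynomial.finset_sum_coeff,
    MvPolynomial.eval_eq']
  apply Finset.sum_congr rfl
  intro d hd
  have hda : ∑ i, d i = a := stmt5_sum_d Q hhom (MvPolynomial.mem_support_iff.mp hd)
  have hcoe : ∀ i : Fin 3,
      ((Polynomial.C (w i) + Polynomial.C (p i) * Polynomial.X) ^ (d i)).coeff (d i)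
        = p i ^ d i := by
    intro i
    have h := Polynomial.coeff_pow_of_natDegree_le (stmt5_base_deg p w i) (m := d i)
    rw [mul_one] at h
    rw [h]
    congr 1
    simp
  rw [show (algebraMap k (Polynomial k)) (MvPolynomial.coeff d Q)
      = Polynomial.C (MvPolynomial.coeff d Q) from rfl, Polynomial.coeff_C_mul]
  congr 1
  rw [Fin.prod_univ_three
      (fun i => (Polynomial.C (w i) + Polynomial.C (p i) * Polynomial.X) ^ d i),
    ← hda, Fin.sum_univ_three,
    Polynomial.coeff_mul_add_eq_of_natDegree_le
      (le_trans Polynomial.natDegree_mul_le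
        (add_le_add (stmt5_pow_deg p w 0 (d 0)) (stmt5_pow_deg p w 1 (d 1))))
      (stmt5_pow_deg p w 2 (d 2)),
    Polynomial.coeff_mul_add_eq_of_natDegree_le (stmt5_pow_deg p w 0 (d 0)) (stmt5_pow_deg p w 1 (d 1)),
    hcoe 0, hcoe 1, hcoe 2, Fin.prod_univ_three]

lemma stmt5_arith1 (q : ℕ) (h : 2 ≤ q) : (q * q + q + 1) * (q - 1) = q ^ 3 - 1 := by
  obtain ⟨s, rfl⟩ : ∃ s, q = s + 2 := ⟨q - 2, by omega⟩
  have h1 : (s + 2) ^ 3 = s * s * s + 6 * (s * s) + 12 * s + 8 := by ring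
  have h2 : ((s + 2) * (s + 2) + (s + 2) + 1) * (s + 2 - 1)
      = s * s * s + 6 * (s * s) + 12 * s + 7 := by
    rw [show s + 2 - 1 = s + 1 from rfl]; ring
  omega

lemma stmt5_arith2 (q : ℕ) (h : 2 ≤ q) : (q + 1) * (q - 1) = q ^ 2 - 1 := by
  obtain ⟨s, rfl⟩ : ∃ s, q = s + 2 := ⟨q - 2, by omega⟩
  have h1 : (s + 2) ^ 2 = s * s + 4 * s + 4 := by ring
  have h2 : (s + 2 + 1) * (s + 2 - 1) = s * s + 4 * s + 3 := by
    rw [show s + 2 - 1 = s + 1 from rfl]; ring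
  omega

end Aux

/-- Let k = 𝔽_q and Q ∈ k[x,y,z] a nonzero homogeneous polynomial of
degree a. The set C_Q of lines through the origin in k³ on which Q vanishes
identically has at most a(q+1) elements. -/
theorem stmt5 {k : Type*} [Field k] [Fintype k] (a : ℕ)
    (Q : MvPolynomial (Fin 3) k) (hQ : Q ≠ 0) (hhom : Q.IsHomogeneous a) :
    Nat.card {L : Projectivization k (Fin 3 → k) |
        ∀ v ∈ L.submodule, MvPolynomial.eval v Q = 0}
      ≤ a * (Fintype.card k + 1) := by
  classical
  set q := Fintype.card k with hqdef
  have hq2 : 2 ≤ q := Fintype.one_lt_card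
  haveI : Finite (Projectivization k (Fin 3 → k)) :=
    inferInstanceAs (Finite (Quotient (projectivizationSetoid k (Fin 3 → k))))
  haveI : Fintype (Projectivization k (Fin 3 → k)) := Fintype.ofFinite _
  set S : Set (Projectivization k (Fin 3 → k)) :=
    {L | ∀ v ∈ L.submodule, MvPolynomial.eval v Q = 0} with hSdef
  haveI : Fintype S := Fintype.ofFinite _
  have hNS : Nat.card S = S.toFinset.card := by
    rw [Set.toFinset_card, Nat.card_eq_fintype_card]
  -- the case a = 0
  rcases Nat.eq_zero_or_pos a with rfl | ha1
  · have hSempty : S = ∅ := by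
      ext L
      simp only [hSdef, Set.mem_setOf_eq, Set.mem_empty_iff_false, iff_false]
      intro hL
      apply hQ
      ext d
      rcases eq_or_ne d 0 with rfl | hd0
      · have h0 : MvPolynomial.eval (0 : Fin 3 → k) Q = 0 := hL 0 (Submodule.zero_mem _)
        rw [MvPolynomial.eval_zero, MvPolynomial.constantCoeff_eq] at h0
        rw [h0, MvPolynomial.coeff_zero]
      · rw [MvPolynomial.coeff_zero]
        exact hhom.coeff_eq_zero (by simpa [Finsupp.degree_eq_zero_iff] using hd0)
    rw [hSempty]
    simp
  -- eval at 0 vanishes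
  have h00 : MvPolynomial.eval (0 : Fin 3 → k) Q = 0 := by
    rw [MvPolynomial.eval_zero]
    have : MvPolynomial.coeff 0 Q = 0 :=
      hhom.coeff_eq_zero (by simp [Finsupp.degree_eq_zero_iff]; omega)
    rw [MvPolynomial.constantCoeff_eq]; exact this
  by_cases hex : ∃ p0 : Fin 3 → k, MvPolynomial.eval p0 Q ≠ 0
  · -- main case: pencil of lines through a point where Q does not vanish
    obtain ⟨p, hp⟩ := hex
    have hp0 : p ≠ 0 := by rintro rfl; exact hp h00
    set M : Submodule k (Fin 3 → k) := k ∙ p with hMdef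
    set W := (Fin 3 → k) ⧸ M with hWdef
    haveI : Finite W := Finite.of_surjective _ (Submodule.mkQ_surjective M)
    haveI : Fintype W := Fintype.ofFinite _
    have hrank : Module.finrank k W = 2 := by
      have h3 : Module.finrank k (Fin 3 → k) = 3 := by
        exact (Module.finrank_fintype_fun_eq_card (R := k) (η := Fin 3)).trans (Fintype.card_fin 3)
      have h1 : Module.finrank k M = 1 := finrank_span_singleton hp0
      have h2 : Module.finrank k W + Module.finrank k M = Module.finrank k (Fin 3 → k) :=
        Submodule.finrank_quotient_add_finrank M
      omega
    haveI : Nontrivial W := Module.nontrivial_of_finrank_eq_succ (n := 1) hrank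
    haveI : Finite (ℙ k W) := inferInstanceAs (Finite (Quotient (projectivizationSetoid k W)))
    haveI : Fintype (ℙ k W) := Fintype.ofFinite _
    have hcW : Fintype.card W = q ^ 2 := by
      rw [Module.card_eq_pow_finrank (K := k), hrank]
    have hPW : Nat.card (ℙ k W) = q + 1 := by
      apply Nat.eq_of_mul_eq_mul_right (show 0 < q - 1 by omega)
      rw [stmt5_proj_card_mul, hcW, ← stmt5_arith2 q hq2]
    set π := M.mkQ with hπdef
    have hmem0 : ∀ L : Projectivization k (Fin 3 → k),
        (∀ v ∈ L.submodule, MvPolynomial.eval v Q = 0) → π L.rep ≠ 0 := by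
      intro L hL hcon
      rw [hπdef, Submodule.mkQ_apply, Submodule.Quotient.mk_eq_zero] at hcon
      obtain ⟨t, ht⟩ := Submodule.mem_span_singleton.mp hcon
      have ht0 : t ≠ 0 := by rintro rfl; exact L.rep_nonzero (by rw [← ht, zero_smul])
      apply hp
      apply hL
      rw [Projectivization.submodule_eq]
      have hpt : p = t⁻¹ • L.rep := by
        rw [← ht, smul_smul, inv_mul_cancel₀ ht0, one_smul]
      rw [hpt]
      exact Submodule.smul_mem _ _ (Submodule.mem_span_singleton_self _)
    set f : Projectivization k (Fin 3 → k) → ℙ k W := fun L =>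
      if h : π L.rep ≠ 0 then Projectivization.mk k (π L.rep) h
      else Classical.arbitrary _ with hfdef
    have hmain : S.toFinset.card ≤ a * (S.toFinset.image f).card := by
      apply Finset.card_le_mul_card_image
      intro b hb
      obtain ⟨L0, hL0, hfb⟩ := Finset.mem_image.mp hb
      have hL0S : ∀ v ∈ L0.submodule, MvPolynomial.eval v Q = 0 := Set.mem_toFinset.mp hL0
      set w : Fin 3 → k := L0.rep with hwdef
      have hw : π w ≠ 0 := hmem0 L0 hL0S
      have hfL0 : f L0 = Projectivization.mk k (π w) hw := dif_pos hw
      set g : Polynomial k := MvPolynomial.aeval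
        (fun i => Polynomial.C (w i) + Polynomial.C (p i) * Polynomial.X) Q with hgdef
      have hga : g.coeff a = MvPolynomial.eval p Q := stmt5_aux_coeff Q hhom p w
      have hg0 : g ≠ 0 := by
        intro h
        apply hp
        rw [← hga, h, Polynomial.coeff_zero]
      have hgdeg : g.natDegree ≤ a := stmt5_aux_deg Q hhom p w
      -- every member of the fiber contains a vector w + s • p
      have hfiber : ∀ L ∈ S.toFinset, f L = b → ∃ s : k, w + s • p ∈ L.submodule := by
        intro L hLS hfL
        have hLmem : ∀ v ∈ L.submodule, MvPolynomial.eval v Q = 0 := Set.mem_toFinset.mp hLS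
        have hπL : π L.rep ≠ 0 := hmem0 L hLmem
        have hfL' : Projectivization.mk k (π L.rep) hπL = Projectivization.mk k (π w) hw := by
          rw [show Projectivization.mk k (π L.rep) hπL = f L from (dif_pos hπL).symm,
            show Projectivization.mk k (π w) hw = f L0 from (dif_pos hw).symm, hfL, hfb]
        rw [Projectivization.mk_eq_mk_iff] at hfL'
        obtain ⟨c, hc⟩ := hfL'
        have hc' : (c : k) • π w = π L.rep := by simpa [Units.smul_def] using hc
        have hmem : L.rep - (c : k) • w ∈ M := by
          rw [← Submodule.Quotient.mk_eq_zero]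
          have : π (L.rep - (c : k) • w) = 0 := by
            rw [map_sub, map_smul, hc']
            simp
          simpa [hπdef, Submodule.mkQ_apply] using this
        obtain ⟨e, he⟩ := Submodule.mem_span_singleton.mp hmem
        refine ⟨(c : k)⁻¹ * e, ?_⟩
        have hrep : L.rep = (c : k) • w + e • p := by
          rw [he]; abel
        have hkey : w + ((c : k)⁻¹ * e) • p = (c : k)⁻¹ • L.rep := by
          rw [hrep, smul_add, smul_smul, smul_smul, inv_mul_cancel₀ c.ne_zero, one_smul]
        rw [hkey, Projectivization.submodule_eq]
        exact Submodule.smul_mem _ _ (Submodule.mem_span_singleton_self _)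
      set ψ : Projectivization k (Fin 3 → k) → k := fun L =>
        if h : ∃ s : k, w + s • p ∈ L.submodule then h.choose else 0 with hψdef
      have hψspec : ∀ L ∈ S.toFinset, f L = b → w + (ψ L) • p ∈ L.submodule := by
        intro L hLS hfL
        have hex' := hfiber L hLS hfL
        rw [hψdef]
        simp only [dif_pos hex']
        exact hex'.choose_spec
      have hne : ∀ s : k, w + s • p ≠ 0 := by
        intro s hcon
        apply hw
        have : w = (-s) • p := by
          rw [neg_smul]
          rw [add_eq_zero_iff_eq_neg] at hcon
          exact hcon
        rw [hπdef, Submodule.mkQ_apply, Submodule.Quotient.mk_eq_zero, this]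
        exact Submodule.smul_mem _ _ (Submodule.mem_span_singleton_self _)
      calc (S.toFinset.filter fun L => f L = b).card
          ≤ g.roots.toFinset.card := by
            apply Finset.card_le_card_of_injOn ψ
            · intro L hL
              rw [Finset.mem_coe, Finset.mem_filter] at hL
              have hspec := hψspec L hL.1 hL.2
              have hLmem : ∀ v ∈ L.submodule, MvPolynomial.eval v Q = 0 :=
                Set.mem_toFinset.mp hL.1
              have hval : MvPolynomial.eval (w + (ψ L) • p) Q = 0 := hLmem _ hspec
              rw [Finset.mem_coe, Multiset.mem_toFinset, Polynomial.mem_roots hg0]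
              show g.IsRoot (ψ L)
              rw [Polynomial.IsRoot, hgdef, stmt5_aux_eval Q p w (ψ L), hval]
            · intro L1 h1 L2 h2 heq
              rw [Finset.coe_filter, Set.mem_setOf_eq] at h1 h2
              have hs1 := hψspec L1 h1.1 h1.2
              have hs2 := hψspec L2 h2.1 h2.2
              rw [heq] at hs1
              exact stmt5_eq_of_common (hne (ψ L2)) hs1 hs2
        _ ≤ Multiset.card g.roots := g.roots.toFinset_card_le
        _ ≤ g.natDegree := g.card_roots'
        _ ≤ a := hgdeg
    have himage : (S.toFinset.image f).card ≤ q + 1 := by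
      calc (S.toFinset.image f).card ≤ Fintype.card (ℙ k W) := Finset.card_le_univ _
        _ = Nat.card (ℙ k W) := (Nat.card_eq_fintype_card).symm
        _ = q + 1 := hPW
    rw [hNS]
    calc S.toFinset.card ≤ a * (S.toFinset.image f).card := hmain
      _ ≤ a * (q + 1) := Nat.mul_le_mul_left a himage
  · -- degenerate case: Q vanishes everywhere, so a ≥ q + 1
    push_neg at hex
    have hqa : q + 1 ≤ a := by
      by_contra hc
      push_neg at hc
      apply hQ
      apply hhom.eq_zero_of_forall_eval_eq_zero_of_le_card hex
      rw [Cardinal.mk_fintype]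
      exact_mod_cast Nat.lt_succ_iff.mp hc
    have hPV : Nat.card (Projectivization k (Fin 3 → k)) = q * q + q + 1 := by
      apply Nat.eq_of_mul_eq_mul_right (show 0 < q - 1 by omega)
      rw [stmt5_proj_card_mul, show Fintype.card (Fin 3 → k) = q ^ 3 by
        simp [hqdef, Fintype.card_fun], stmt5_arith1 q hq2]
    have hle : Nat.card S ≤ Nat.card (Projectivization k (Fin 3 → k)) :=
      Nat.card_le_card_of_injective (Subtype.val : S → _) Subtype.val_injective
    rw [hPV] at hle
    refine le_trans hle ?_
    have : (q + 1) * (q + 1) ≤ a * (q + 1) := Nat.mul_le_mul_right _ hqa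
    nlinarith
end

section
/- For any d-tensor (multilinear map) P : V₁ × ⋯ × V_d → k over a field k with |k| ≥ d+2 and char(k) not dividing the relevant group orders, the rank and partition rank satisfy r(P) ≤ pr(P) ≤ 4^d · r(P). -/
open MvPolynomial

variable {k : Type*} [Field k] {d : ℕ} {n : Fin d → ℕ}

/-- The set of `r` such that the `d`-tensor `P` admits a decomposition
`P = ∑_{j<r} Q_j · R_j` (as functions on `V₁ × ⋯ × V_d`), where `Q_j, R_j` are
polynomials of degree `< d` on the product space.  The rank `r(P)` is the
infimum of this set. -/
def tensorRankSet [Field k] (P : MultilinearMap k (fun i : Fin d => (Fin (n i) → k)) k) :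
    Set ℕ :=
  {r | ∃ Q R : Fin r → MvPolynomial ((i : Fin d) × Fin (n i)) k,
    (∀ j, (Q j).totalDegree < d ∧ (R j).totalDegree < d) ∧
    ∀ x : (i : Fin d) → Fin (n i) → k,
      P x = ∑ j, MvPolynomial.eval (fun p => x p.1 p.2) (Q j) *
                 MvPolynomial.eval (fun p => x p.1 p.2) (R j)}

/-- The set of `r` such that the `d`-tensor `P` admits a partition-rank
decomposition `P(x₁,…,x_d) = ∑_{j<r} Q_j((x_l)_{l∈J_j}) · R_j((x_l)_{l∉J_j})`
with `J_j` nonempty proper subsets of `[d]` and `Q_j, R_j` multilinear.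
The partition rank `pr(P)` is the infimum of this set. -/
def tensorPRankSet [Field k] (P : MultilinearMap k (fun i : Fin d => (Fin (n i) → k)) k) :
    Set ℕ :=
  {r | ∃ (J : Fin r → Finset (Fin d))
      (Q : (j : Fin r) → MultilinearMap k (fun i : {i : Fin d // i ∈ J j} => (Fin (n i.1) → k)) k)
      (R : (j : Fin r) → MultilinearMap k (fun i : {i : Fin d // i ∉ J j} => (Fin (n i.1) → k)) k),
    (∀ j, (J j).Nonempty ∧ J j ≠ Finset.univ) ∧
    ∀ x : (i : Fin d) → Fin (n i) → k,
      P x = ∑ j, Q j (fun i => x i.1) * R j (fun i => x i.1)}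

section MLGeneric

variable {K : Type*} [Field K] {ι : Type*} [Fintype ι] [DecidableEq ι] {N : ι → ℕ}

noncomputable def mlOfCoeff (N : ι → ℕ) (c : ((i : ι) → Fin (N i)) → K) :
    MultilinearMap K (fun i : ι => (Fin (N i) → K)) K :=
  ∑ f : (i : ι) → Fin (N i), c f •
    (MultilinearMap.mkPiAlgebra K ι K).compLinearMap (fun i => LinearMap.proj (f i))

lemma mlOfCoeff_apply (c : ((i : ι) → Fin (N i)) → K) (x : (i : ι) → Fin (N i) → K) :
    mlOfCoeff N c x = ∑ f : (i : ι) → Fin (N i), c f * ∏ i, x i (f i) := by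
  simp [mlOfCoeff, MultilinearMap.sum_apply, MultilinearMap.smul_apply,
    MultilinearMap.compLinearMap_apply, MultilinearMap.mkPiAlgebra_apply, smul_eq_mul]

lemma ml_expand (Q : MultilinearMap K (fun i : ι => (Fin (N i) → K)) K)
    (x : (i : ι) → Fin (N i) → K) :
    Q x = ∑ f : (i : ι) → Fin (N i), (∏ i, x i (f i)) * Q (fun i => Pi.single (f i) 1) := by
  have hx : x = fun i => ∑ j : Fin (N i), x i j • (Pi.single j (1 : K) : Fin (N i) → K) := by
    funext i j'
    simp [Pi.single_apply, Finset.sum_apply, mul_ite, Finset.sum_ite_eq]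
  conv_lhs => rw [hx]
  rw [Q.map_sum]
  refine Finset.sum_congr rfl fun f _ => ?_
  rw [Q.map_smul_univ, smul_eq_mul]

end MLGeneric

section Mono

variable {k : Type*} [Field k] {d : ℕ} {n : Fin d → ℕ}

noncomputable def mSet (S : Finset (Fin d)) (f : (i : Fin d) → Fin (n i)) :
    ((i : Fin d) × Fin (n i)) →₀ ℕ :=
  ∑ l ∈ S, Finsupp.single ⟨l, f l⟩ 1

lemma mSet_sum (S : Finset (Fin d)) (f : (i : Fin d) → Fin (n i)) :
    ((mSet (n := n) S f).sum fun _ e => e) = S.card := by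
  rw [mSet, ← Finsupp.sum_finset_sum_index (by simp) (by simp)]
  simp [Finsupp.sum_single_index]

lemma mSet_prod {M : Type*} [CommMonoid M] (S : Finset (Fin d)) (f : (i : Fin d) → Fin (n i))
    (x : ((i : Fin d) × Fin (n i)) → M) :
    ((mSet (n := n) S f).prod fun p e => x p ^ e) = ∏ l ∈ S, x ⟨l, f l⟩ := by
  rw [mSet, ← Finsupp.prod_finset_sum_index (fun _ => pow_zero _) (fun _ _ _ => pow_add _ _ _)]
  simp [Finsupp.prod_single_index]

lemma mSet_apply (S : Finset (Fin d)) (f : (i : Fin d) → Fin (n i))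
    (p : (i : Fin d) × Fin (n i)) :
    mSet (n := n) S f p = if p.1 ∈ S ∧ p.2 = f p.1 then 1 else 0 := by
  classical
  obtain ⟨i, j⟩ := p
  rw [mSet, Finset.sum_apply']
  by_cases hi : i ∈ S
  · rw [Finset.sum_eq_single_of_mem i hi (fun b _ hbi => by
      simp [Finsupp.single_apply, hbi])]
    simp only [Finsupp.single_apply, hi, true_and]
    by_cases hj : j = f i
    · simp [hj]
    · rw [if_neg hj, if_neg (by simp [hj, eq_comm])]
  · rw [Finset.sum_eq_zero (fun b hb => by
      have hbi : b ≠ i := fun h => hi (h ▸ hb)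
      simp [Finsupp.single_apply, hbi])]
    simp [hi]

def degB (l : Fin d) (m : ((i : Fin d) × Fin (n i)) →₀ ℕ) : ℕ := ∑ j, m ⟨l, j⟩

lemma sum_degB (m : ((i : Fin d) × Fin (n i)) →₀ ℕ) :
    (m.sum fun _ e => e) = ∑ l, degB l m := by
  rw [Finsupp.sum_fintype _ _ (fun _ => rfl), ← Finset.univ_sigma_univ, Finset.sum_sigma]
  rfl

lemma prod_pow_degB {M : Type*} [CommMonoid M] (g : Fin d → M)
    (m : ((i : Fin d) × Fin (n i)) →₀ ℕ) :
    (m.prod fun p e => g p.1 ^ e) = ∏ l, g l ^ degB l m := by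
  rw [Finsupp.prod_fintype _ _ (fun _ => pow_zero _), ← Finset.univ_sigma_univ,
    Finset.prod_sigma]
  simp [degB, Finset.prod_pow_eq_pow_sum]

lemma degB_mSet (l : Fin d) (S : Finset (Fin d)) (f : (i : Fin d) → Fin (n i)) :
    degB l (mSet (n := n) S f) = if l ∈ S then 1 else 0 := by
  simp only [degB, mSet_apply]
  by_cases hl : l ∈ S
  · simp [hl]
  · simp [hl]

lemma mSet_univ_inj (f g : (i : Fin d) → Fin (n i))
    (h : mSet (n := n) Finset.univ f = mSet Finset.univ g) : f = g := by
  funext l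
  have := DFunLike.congr_fun h ⟨l, f l⟩
  rw [mSet_apply, mSet_apply] at this
  simp only [Finset.mem_univ, true_and, if_pos rfl] at this
  by_contra hne
  rw [if_neg (fun hh : f l = g l => hne hh)] at this
  simp at this

lemma eq_mSet_of_degB (m : ((i : Fin d) × Fin (n i)) →₀ ℕ) (h : ∀ l, degB l m = 1) :
    ∃ f : (i : Fin d) → Fin (n i), m = mSet Finset.univ f := by
  classical
  have h1 : ∀ l, ∃ j, m ⟨l, j⟩ ≠ 0 := by
    intro l
    by_contra hc
    push_neg at hc
    have := h l
    rw [degB] at this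
    simp [hc] at this
  choose f hf using h1
  have key : ∀ l, m ⟨l, f l⟩ = 1 ∧ ∀ j, j ≠ f l → m ⟨l, j⟩ = 0 := by
    intro l
    have hs := h l
    rw [degB, ← Finset.add_sum_erase _ _ (Finset.mem_univ (f l))] at hs
    have h1' : 1 ≤ m ⟨l, f l⟩ := Nat.one_le_iff_ne_zero.mpr (hf l)
    have hz : ∑ j ∈ Finset.univ.erase (f l), m ⟨l, j⟩ = 0 := by omega
    refine ⟨by omega, fun j hj => ?_⟩
    exact (Finset.sum_eq_zero_iff.mp hz) j (Finset.mem_erase.mpr ⟨hj, Finset.mem_univ j⟩)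
  refine ⟨f, ?_⟩
  ext p
  obtain ⟨l, j⟩ := p
  rw [mSet_apply]
  simp only [Finset.mem_univ, true_and]
  by_cases hj : j = f l
  · subst hj; simp [(key l).1]
  · simp [hj, (key l).2 j hj]

end Mono

section Scale

variable {k : Type*} [Field k] {d : ℕ} {n : Fin d → ℕ}

noncomputable def scaleSub (s : Fin d → k) (F : MvPolynomial ((i : Fin d) × Fin (n i)) k) :
    MvPolynomial ((i : Fin d) × Fin (n i)) k :=
  aeval (fun p => C (s p.1) * X p) F

lemma eval_scaleSub (s : Fin d → k) (F : MvPolynomial ((i : Fin d) × Fin (n i)) k)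
    (y : ((i : Fin d) × Fin (n i)) → k) :
    eval y (scaleSub s F) = eval (fun p => s p.1 * y p) F := by
  induction F using MvPolynomial.induction_on with
  | C a => simp [scaleSub]
  | add p q hp hq => simp only [scaleSub, map_add] at *; rw [hp, hq]
  | mul_X p i hp =>
      simp only [scaleSub, map_mul, aeval_X, eval_mul, eval_C, eval_X] at hp ⊢
      rw [hp]

lemma scaleSub_monomial (s : Fin d → k) (m : ((i : Fin d) × Fin (n i)) →₀ ℕ) (c : k) :
    scaleSub s (monomial m c) = monomial m ((∏ l, s l ^ degB l m) * c) := by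
  rw [scaleSub, aeval_monomial, ← prod_pow_degB]
  have h1 : (m.prod fun p e => (C (s p.1) * X p : MvPolynomial ((i : Fin d) × Fin (n i)) k) ^ e)
      = C (m.prod fun p e => s p.1 ^ e) * m.prod fun p e =>
          (X p : MvPolynomial ((i : Fin d) × Fin (n i)) k) ^ e := by
    simp only [Finsupp.prod, mul_pow, Finset.prod_mul_distrib, map_prod, map_pow]
  rw [h1, monomial_eq, algebraMap_eq, map_mul]
  ring

lemma coeff_scaleSub (s : Fin d → k) (F : MvPolynomial ((i : Fin d) × Fin (n i)) k)
    (m : ((i : Fin d) × Fin (n i)) →₀ ℕ) :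
    coeff m (scaleSub s F) = (∏ l, s l ^ degB l m) * coeff m F := by
  conv_lhs => rw [F.as_sum]
  rw [show scaleSub s (∑ v ∈ F.support, monomial v (coeff v F))
        = ∑ v ∈ F.support, scaleSub s (monomial v (coeff v F)) from
      map_sum (aeval _) _ _]
  rw [MvPolynomial.coeff_sum]
  simp_rw [scaleSub_monomial, coeff_monomial]
  by_cases hm : m ∈ F.support
  · rw [Finset.sum_ite_eq' F.support m (fun v => (∏ l, s l ^ degB l v) * coeff v F), if_pos hm]
  · rw [Finset.sum_ite_eq' F.support m (fun v => (∏ l, s l ^ degB l v) * coeff v F), if_neg hm,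
      MvPolynomial.notMem_support_iff.mp hm, mul_zero]

end Scale
section Extract

variable {k : Type*} [Field k] {d : ℕ} {n : Fin d → ℕ}

lemma stage1_sum (Z : Finset (Fin d)) :
    (∑ T : Finset (Fin d), (-1 : k) ^ T.card * (if T ⊆ Z then 1 else 0))
      = if Z = ∅ then 1 else 0 := by
  classical
  have h1 : (∑ T : Finset (Fin d), (-1 : k) ^ T.card * (if T ⊆ Z then 1 else 0))
      = ∑ T ∈ Z.powerset, (-1 : k) ^ T.card := by
    simp_rw [mul_ite, mul_one, mul_zero]
    rw [← Finset.sum_filter]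
    rw [show Finset.univ.filter (fun T : Finset (Fin d) => T ⊆ Z) = Z.powerset by
      ext T; simp [Finset.mem_powerset]]
  rw [h1]
  have h2 := Finset.sum_powerset_neg_one_pow_card (x := Z)
  have h3 : ((∑ T ∈ Z.powerset, (-1 : ℤ) ^ T.card : ℤ) : k)
      = ∑ T ∈ Z.powerset, (-1 : k) ^ T.card := by push_cast; ring
  rw [← h3, h2]
  split <;> simp

lemma exists_interp_weights (hk : ∃ s : Finset k, d + 2 ≤ s.card) :
    ∃ c w : Fin (d + 1) → k, ∀ e : ℕ, e ≤ d →
      (∑ u, w u * c u ^ e) = if e = 1 then 1 else 0 := by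
  classical
  obtain ⟨s, hs⟩ := hk
  obtain ⟨t, _, htc⟩ := Finset.exists_subset_card_eq (show d + 1 ≤ s.card by omega)
  let e0 := Finset.equivFinOfCardEq htc
  set c : Fin (d + 1) → k := fun u => ((e0.symm u : t) : k) with hc
  set w : Fin (d + 1) → k := fun u => (Lagrange.basis Finset.univ c u).coeff 1 with hw
  refine ⟨c, w, fun e he => ?_⟩
  have hcinj : Function.Injective c := fun a b hab => by
    have := Subtype.val_injective hab
    exact e0.symm.injective this
  have hdeg : (Polynomial.X ^ e : Polynomial k).degree
      < ((Finset.univ : Finset (Fin (d + 1))).card : ℕ) := by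
    rw [Polynomial.degree_X_pow, Finset.card_univ, Fintype.card_fin]
    exact_mod_cast Nat.lt_succ_of_le he
  have h := Lagrange.eq_interpolate (v := c) (f := (Polynomial.X ^ e : Polynomial k))
    (Set.injOn_of_injective hcinj) hdeg
  have h1 := congrArg (fun q => Polynomial.coeff q 1) h
  rw [Lagrange.interpolate_apply] at h1
  simp only [Polynomial.coeff_X_pow, Polynomial.finset_sum_coeff, Polynomial.coeff_C_mul,
    Polynomial.eval_pow, Polynomial.eval_X] at h1
  calc (∑ u, w u * c u ^ e) = ∑ u, c u ^ e * w u :=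
        Finset.sum_congr rfl fun u _ => mul_comm _ _
    _ = if e = 1 then 1 else 0 := by
        rw [← h1]
        simp [eq_comm]

lemma extract_ml (hd : 1 ≤ d) (hk : ∃ s : Finset k, d + 2 ≤ s.card)
    (P : MultilinearMap k (fun i : Fin d => (Fin (n i) → k)) k)
    (F : MvPolynomial ((i : Fin d) × Fin (n i)) k)
    (hdeg : F.totalDegree + 2 ≤ 2 * d)
    (hPF : ∀ x : (i : Fin d) → Fin (n i) → k, P x = eval (fun p => x p.1 p.2) F)
    (x : (i : Fin d) → Fin (n i) → k) :
    P x = ∑ f : (i : Fin d) → Fin (n i),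
      (∏ l, x l (f l)) * coeff (mSet Finset.univ f) F := by
  classical
  obtain ⟨c, w, hcw⟩ := exists_interp_weights (k := k) (d := d) hk
  set G : MvPolynomial ((i : Fin d) × Fin (n i)) k :=
    ∑ T : Finset (Fin d),
      C ((-1 : k) ^ T.card) * scaleSub (fun l => if l ∈ T then 0 else 1) F with hG
  have hGcoeff : ∀ m, coeff m G = (if ∀ l, 1 ≤ degB l m then 1 else 0) * coeff m F := by
    intro m
    rw [hG, MvPolynomial.coeff_sum]
    simp_rw [MvPolynomial.coeff_C_mul, coeff_scaleSub]
    have hfac : ∀ T : Finset (Fin d),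
        (∏ l, (if l ∈ T then (0 : k) else 1) ^ degB l m)
          = if T ⊆ Finset.univ.filter (fun l => degB l m = 0) then 1 else 0 := by
      intro T
      rw [Finset.prod_congr rfl (fun l _ => show (if l ∈ T then (0 : k) else 1) ^ degB l m
            = if l ∈ T ∧ degB l m ≠ 0 then 0 else 1 by
          by_cases hl : l ∈ T
          · by_cases hz : degB l m = 0
            · simp [hl, hz]
            · simp [hl, hz]
          · simp [hl])]
      by_cases hT : T ⊆ Finset.univ.filter (fun l => degB l m = 0)
      · rw [if_pos hT]
        exact Finset.prod_eq_one (fun l _ => by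
          rw [if_neg]
          rintro ⟨hl1, hl2⟩
          exact hl2 ((Finset.mem_filter.mp (hT hl1)).2))
      · rw [if_neg hT]
        obtain ⟨l0, hl0T, hl0⟩ := Finset.not_subset.mp hT
        refine Finset.prod_eq_zero (Finset.mem_univ l0) ?_
        rw [if_pos ⟨hl0T, fun hz => hl0 (Finset.mem_filter.mpr ⟨Finset.mem_univ _, hz⟩)⟩]
    simp_rw [hfac, ← mul_assoc]
    rw [← Finset.sum_mul]
    congr 1
    rw [stage1_sum]
    have hiff : (Finset.univ.filter (fun l => degB l m = 0) = ∅) ↔ (∀ l, 1 ≤ degB l m) := by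
      rw [Finset.filter_eq_empty_iff]
      constructor
      · intro h l; have := h (Finset.mem_univ l); omega
      · intro h l _; have := h l; omega
    by_cases hall : ∀ l, 1 ≤ degB l m
    · rw [if_pos (hiff.mpr hall), if_pos hall]
    · rw [if_neg (fun h => hall (hiff.mp h)), if_neg hall]
  have hGeval : ∀ y : (i : Fin d) → Fin (n i) → k,
      eval (fun p : (i : Fin d) × Fin (n i) => y p.1 p.2) G = P y := by
    intro y
    rw [hG, map_sum]
    simp_rw [eval_mul, eval_C, eval_scaleSub]
    have hterm : ∀ T : Finset (Fin d),
        eval (fun p : (i : Fin d) × Fin (n i) => (if p.1 ∈ T then (0 : k) else 1) * y p.1 p.2) F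
          = (if T = ∅ then 1 else 0) * P y := by
      intro T
      have h0 := hPF (fun l => (if l ∈ T then (0 : k) else 1) • y l)
      have h1 : eval (fun p : (i : Fin d) × Fin (n i) =>
          (if p.1 ∈ T then (0 : k) else 1) * y p.1 p.2) F
            = P (fun l => (if l ∈ T then (0 : k) else 1) • y l) := by
        rw [h0]; rfl
      rw [h1, P.map_smul_univ, smul_eq_mul]
      congr 1
      by_cases hT : T = ∅
      · simp [hT]
      · obtain ⟨l0, hl0⟩ := Finset.nonempty_iff_ne_empty.mpr hT
        rw [if_neg hT]
        exact Finset.prod_eq_zero (Finset.mem_univ l0) (by simp [hl0])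
    simp_rw [hterm, ← mul_assoc]
    rw [← Finset.sum_mul]
    have : (∑ T : Finset (Fin d), (-1 : k) ^ T.card * (if T = ∅ then 1 else 0)) = 1 := by
      rw [Finset.sum_eq_single (∅ : Finset (Fin d))
        (fun T _ hT => by rw [if_neg hT, mul_zero])
        (fun h => absurd (Finset.mem_univ _) h)]
      simp
    rw [this, one_mul]
  set H : MvPolynomial ((i : Fin d) × Fin (n i)) k :=
    ∑ tup : Fin d → Fin (d + 1),
      C (∏ l, w (tup l)) * scaleSub (fun l => c (tup l)) G with hH
  have hHcoeff : ∀ m, coeff m H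
      = (∏ l, ∑ u, w u * c u ^ degB l m) * coeff m G := by
    intro m
    rw [hH, MvPolynomial.coeff_sum]
    simp_rw [MvPolynomial.coeff_C_mul, coeff_scaleSub, ← mul_assoc,
      ← Finset.prod_mul_distrib]
    rw [← Finset.sum_mul]
    congr 1
    rw [Finset.prod_univ_sum, Fintype.piFinset_univ]
  have hHeval : eval (fun p : (i : Fin d) × Fin (n i) => x p.1 p.2) H = P x := by
    rw [hH, map_sum]
    simp_rw [eval_mul, eval_C, eval_scaleSub]
    have hterm : ∀ tup : Fin d → Fin (d + 1),
        eval (fun p : (i : Fin d) × Fin (n i) => c (tup p.1) * x p.1 p.2) G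
          = (∏ l, c (tup l)) * P x := by
      intro tup
      have h1 : eval (fun p : (i : Fin d) × Fin (n i) => c (tup p.1) * x p.1 p.2) G
          = P (fun l => c (tup l) • x l) := by
        rw [← hGeval (fun l => c (tup l) • x l)]; rfl
      rw [h1, P.map_smul_univ, smul_eq_mul]
    simp_rw [hterm, ← mul_assoc, ← Finset.prod_mul_distrib]
    rw [← Finset.sum_mul]
    have hsum1 : (∑ tup : Fin d → Fin (d + 1), ∏ l, (w (tup l) * c (tup l))) = 1 := by
      have h1 := Finset.prod_univ_sum (fun _ : Fin d => (Finset.univ : Finset (Fin (d + 1))))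
        (fun _ u => w u * c u)
      rw [Fintype.piFinset_univ] at h1
      rw [← h1]
      have h2 : ∀ l : Fin d, (∑ u, w u * c u) = 1 := fun l => by
        have := hcw 1 hd
        simpa using this
      rw [Finset.prod_congr rfl (fun l _ => h2 l), Finset.prod_const_one]
    rw [hsum1, one_mul]
  have hHml : ∀ m, coeff m H = (if ∀ l, degB l m = 1 then 1 else 0) * coeff m F := by
    intro m
    rw [hHcoeff]
    by_cases hml : ∀ l, degB l m = 1
    · have h1 : ∀ l : Fin d, (∑ u, w u * c u ^ degB l m) = 1 := fun l => by
        rw [hml l]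
        have := hcw 1 hd
        simpa using this
      rw [Finset.prod_congr rfl (fun l _ => h1 l), Finset.prod_const_one, one_mul, hGcoeff,
        if_pos (fun l => le_of_eq (hml l).symm), one_mul, if_pos hml, one_mul]
    · rw [if_neg hml, zero_mul]
      by_cases hz : coeff m G = 0
      · rw [hz, mul_zero]
      · push_neg at hml
        obtain ⟨l0, hl0⟩ := hml
        have hsupF : coeff m F ≠ 0 := by
          intro h0
          rw [hGcoeff, h0, mul_zero] at hz
          exact hz rfl
        have hms : (m.sum fun _ e => e) ≤ F.totalDegree :=
          MvPolynomial.le_totalDegree (MvPolynomial.mem_support_iff.mpr hsupF)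
        have hall1 : ∀ l, 1 ≤ degB l m := by
          by_contra hc
          rw [hGcoeff, if_neg hc, zero_mul] at hz
          exact hz rfl
        have hsum2 : ∑ l, degB l m ≤ 2 * d - 2 := by
          rw [← sum_degB]
          omega
        have hsplit : degB l0 m + ∑ l ∈ Finset.univ.erase l0, degB l m = ∑ l, degB l m :=
          Finset.add_sum_erase Finset.univ (fun l => degB l m) (Finset.mem_univ l0)
        have hge : (d - 1) ≤ ∑ l ∈ Finset.univ.erase l0, degB l m := by
          calc d - 1 = (Finset.univ.erase l0).card := by
                rw [Finset.card_erase_of_mem (Finset.mem_univ _), Finset.card_univ,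
                  Fintype.card_fin]
            _ = ∑ l ∈ Finset.univ.erase l0, 1 := by rw [Finset.card_eq_sum_ones]
            _ ≤ ∑ l ∈ Finset.univ.erase l0, degB l m :=
                Finset.sum_le_sum (fun l _ => hall1 l)
        have hle : degB l0 m ≤ d := by omega
        refine mul_eq_zero_of_left (Finset.prod_eq_zero (Finset.mem_univ l0) ?_) _
        rw [hcw _ hle, if_neg hl0]
  -- final assembly
  have hPH : P x = eval (fun p : (i : Fin d) × Fin (n i) => x p.1 p.2) H := hHeval.symm
  rw [hPH, MvPolynomial.eval_eq]
  have hsupp : H.support ⊆ Finset.univ.image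
      (fun f : (i : Fin d) → Fin (n i) => mSet Finset.univ f) := by
    intro m hm
    have hc := MvPolynomial.mem_support_iff.mp hm
    rw [hHml] at hc
    have hml : ∀ l, degB l m = 1 := by
      by_contra hc2
      rw [if_neg hc2, zero_mul] at hc
      exact hc rfl
    obtain ⟨f, hf⟩ := eq_mSet_of_degB m hml
    exact Finset.mem_image.mpr ⟨f, Finset.mem_univ f, hf.symm⟩
  rw [Finset.sum_subset hsupp (fun m _ hm => by
    rw [MvPolynomial.notMem_support_iff.mp hm, zero_mul])]
  rw [Finset.sum_image (fun f _ g _ h => mSet_univ_inj f g h)]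
  refine Finset.sum_congr rfl fun f _ => ?_
  have hc1 : coeff (mSet (n := n) Finset.univ f) H = coeff (mSet Finset.univ f) F := by
    rw [hHml, if_pos (fun l => by rw [degB_mSet]; simp), one_mul]
  rw [hc1]
  have hc2 : (∏ p ∈ (mSet (n := n) Finset.univ f).support,
        x p.1 p.2 ^ (mSet (n := n) Finset.univ f) p)
      = ((mSet (n := n) Finset.univ f).prod fun p e => (x p.1 p.2) ^ e) := rfl
  rw [hc2, mSet_prod (x := fun p : (i : Fin d) × Fin (n i) => x p.1 p.2)]
  rw [mul_comm]

end Extract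
section PartitionCoeff

variable {k : Type*} [Field k] {d : ℕ} {n : Fin d → ℕ}

lemma antidiag_structure (f : (i : Fin d) → Fin (n i))
    (a b : ((i : Fin d) × Fin (n i)) →₀ ℕ) (hab : a + b = mSet Finset.univ f) :
    a = mSet (Finset.univ.filter fun l => a ⟨l, f l⟩ ≠ 0) f
      ∧ b = mSet ((Finset.univ.filter fun l => a ⟨l, f l⟩ ≠ 0))ᶜ f := by
  classical
  have hval : ∀ p, a p + b p = mSet (n := n) Finset.univ f p := fun p => by
    rw [← Finsupp.add_apply, hab]
  constructor
  · ext p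
    obtain ⟨l, j⟩ := p
    have h := hval ⟨l, j⟩
    rw [mSet_apply] at h
    simp only [Finset.mem_univ, true_and] at h
    rw [mSet_apply]
    simp only [Finset.mem_filter, Finset.mem_univ, true_and]
    by_cases hj : j = f l
    · subst hj
      rw [if_pos rfl] at h
      by_cases ha : a ⟨l, f l⟩ = 0
      · rw [if_neg (fun hc => hc.1 ha)]
        exact ha
      · rw [if_pos ⟨ha, rfl⟩]
        omega
    · rw [if_neg hj] at h
      rw [if_neg (fun hc => hj hc.2)]
      omega
  · ext p
    obtain ⟨l, j⟩ := p
    have h := hval ⟨l, j⟩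
    rw [mSet_apply] at h
    simp only [Finset.mem_univ, true_and] at h
    rw [mSet_apply]
    simp only [Finset.mem_compl, Finset.mem_filter, Finset.mem_univ, true_and, not_not]
    by_cases hj : j = f l
    · subst hj
      rw [if_pos rfl] at h
      by_cases ha : a ⟨l, f l⟩ = 0
      · rw [if_pos ⟨ha, rfl⟩]
        omega
      · rw [if_neg (fun hc => ha hc.1)]
        omega
    · rw [if_neg hj] at h
      rw [if_neg (fun hc => hj hc.2)]
      omega

lemma coeff_mul_mSet (f : (i : Fin d) → Fin (n i))
    (Q R : MvPolynomial ((i : Fin d) × Fin (n i)) k) :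
    coeff (mSet Finset.univ f) (Q * R)
      = ∑ S : Finset (Fin d), coeff (mSet S f) Q * coeff (mSet Sᶜ f) R := by
  classical
  rw [MvPolynomial.coeff_mul]
  refine Finset.sum_nbij'
    (i := fun pr : (((i : Fin d) × Fin (n i)) →₀ ℕ) × (((i : Fin d) × Fin (n i)) →₀ ℕ) =>
      Finset.univ.filter (fun l => pr.1 ⟨l, f l⟩ ≠ 0))
    (j := fun S : Finset (Fin d) => (mSet S f, mSet Sᶜ f))
    (fun a _ => Finset.mem_univ _) ?_ ?_ ?_ ?_
  · intro S _
    rw [Finset.HasAntidiagonal.mem_antidiagonal]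
    simp only [mSet]
    rw [← Finset.sum_add_sum_compl S]
  · intro pr hpr
    have h := antidiag_structure f pr.1 pr.2 (Finset.HasAntidiagonal.mem_antidiagonal.mp hpr)
    exact Prod.ext h.1.symm h.2.symm
  · intro S _
    have hv : ∀ l, mSet (n := n) S f ⟨l, f l⟩ = if l ∈ S then 1 else 0 := fun l => by
      rw [mSet_apply]
      simp
    ext l
    simp only [Finset.mem_filter, Finset.mem_univ, true_and, hv]
    by_cases hl : l ∈ S <;> simp [hl]
  · intro pr hpr
    have h := antidiag_structure f pr.1 pr.2 (Finset.HasAntidiagonal.mem_antidiagonal.mp hpr)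
    rw [← h.1, ← h.2]

end PartitionCoeff
section SubMono

variable {k : Type*} [Field k] {d : ℕ} {n : Fin d → ℕ}

noncomputable def mSub (S : Finset (Fin d)) (g : (i : {l : Fin d // l ∈ S}) → Fin (n i.1)) :
    ((i : Fin d) × Fin (n i)) →₀ ℕ :=
  ∑ i : {l : Fin d // l ∈ S}, Finsupp.single ⟨i.1, g i⟩ 1

noncomputable def mSub' (S : Finset (Fin d)) (g : (i : {l : Fin d // l ∉ S}) → Fin (n i.1)) :
    ((i : Fin d) × Fin (n i)) →₀ ℕ :=
  ∑ i : {l : Fin d // l ∉ S}, Finsupp.single ⟨i.1, g i⟩ 1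

lemma mSub_sum (S : Finset (Fin d)) (g : (i : {l : Fin d // l ∈ S}) → Fin (n i.1)) :
    ((mSub (n := n) S g).sum fun _ e => e) = S.card := by
  rw [mSub, ← Finsupp.sum_finset_sum_index (by simp) (by simp)]
  simp [Finsupp.sum_single_index, Fintype.card_coe]

lemma mSub'_sum (S : Finset (Fin d)) (g : (i : {l : Fin d // l ∉ S}) → Fin (n i.1)) :
    ((mSub' (n := n) S g).sum fun _ e => e) = d - S.card := by
  rw [mSub', ← Finsupp.sum_finset_sum_index (by simp) (by simp)]
  simp only [Finsupp.sum_single_index, Finset.sum_const, smul_eq_mul, mul_one,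
    Finset.card_univ]
  rw [Fintype.card_subtype_compl (p := fun l : Fin d => l ∈ S)]
  simp [Fintype.card_coe, Fintype.card_subtype]

lemma mSub_prod {M : Type*} [CommMonoid M] (S : Finset (Fin d))
    (g : (i : {l : Fin d // l ∈ S}) → Fin (n i.1)) (y : ((i : Fin d) × Fin (n i)) → M) :
    ((mSub (n := n) S g).prod fun p e => y p ^ e) = ∏ i, y ⟨i.1, g i⟩ := by
  rw [mSub, ← Finsupp.prod_finset_sum_index (fun _ => pow_zero _) (fun _ _ _ => pow_add _ _ _)]
  simp [Finsupp.prod_single_index]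

lemma mSub'_prod {M : Type*} [CommMonoid M] (S : Finset (Fin d))
    (g : (i : {l : Fin d // l ∉ S}) → Fin (n i.1)) (y : ((i : Fin d) × Fin (n i)) → M) :
    ((mSub' (n := n) S g).prod fun p e => y p ^ e) = ∏ i, y ⟨i.1, g i⟩ := by
  rw [mSub', ← Finsupp.prod_finset_sum_index (fun _ => pow_zero _) (fun _ _ _ => pow_add _ _ _)]
  simp [Finsupp.prod_single_index]

lemma mSet_eq_mSub (S : Finset (Fin d)) (f : (i : Fin d) → Fin (n i))
    (g : (i : {l : Fin d // l ∈ S}) → Fin (n i.1))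
    (hfg : ∀ i : {l : Fin d // l ∈ S}, f i.1 = g i) :
    mSet S f = mSub (n := n) S g := by
  rw [mSet, mSub,
    ← Finset.sum_coe_sort S (fun l => Finsupp.single (⟨l, f l⟩ : (i : Fin d) × Fin (n i)) 1)]
  refine Finset.sum_congr rfl fun i _ => ?_
  rw [hfg i]

lemma mSet_compl_eq_mSub' (S : Finset (Fin d)) (f : (i : Fin d) → Fin (n i))
    (g : (i : {l : Fin d // l ∉ S}) → Fin (n i.1))
    (hfg : ∀ i : {l : Fin d // l ∉ S}, f i.1 = g i) :
    mSet Sᶜ f = mSub' (n := n) S g := by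
  rw [mSet, mSub',
    Finset.sum_subtype Sᶜ (fun l => Finset.mem_compl)
      (fun l => Finsupp.single (⟨l, f l⟩ : (i : Fin d) × Fin (n i)) 1)]
  refine Finset.sum_congr rfl fun i _ => ?_
  rw [hfg i]

lemma sum_factor (S : Finset (Fin d)) (A B : MvPolynomial ((i : Fin d) × Fin (n i)) k)
    (x : (i : Fin d) → Fin (n i) → k) :
    (∑ f : (l : Fin d) → Fin (n l), (∏ l, x l (f l)) *
        (coeff (mSet S f) A * coeff (mSet Sᶜ f) B))
      = (mlOfCoeff (fun i : {l : Fin d // l ∈ S} => n i.1)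
            (fun g => coeff (mSub S g) A) (fun i => x i.1))
        * (mlOfCoeff (fun i : {l : Fin d // l ∉ S} => n i.1)
            (fun g => coeff (mSub' S g) B) (fun i => x i.1)) := by
  classical
  rw [mlOfCoeff_apply, mlOfCoeff_apply, Finset.sum_mul_sum]
  set e := (Equiv.piEquivPiSubtypeProd (fun l : Fin d => l ∈ S) (fun l => Fin (n l))).symm
    with he
  rw [← Equiv.sum_comp e (fun f : (l : Fin d) → Fin (n l) =>
    (∏ l, x l (f l)) * (coeff (mSet S f) A * coeff (mSet Sᶜ f) B))]
  rw [Fintype.sum_prod_type]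
  refine Finset.sum_congr rfl fun g _ => Finset.sum_congr rfl fun h _ => ?_
  have hfg : ∀ i : {l : Fin d // l ∈ S}, (e (g, h)) i.1 = g i := fun i => by
    rw [he]
    simp only [Equiv.piEquivPiSubtypeProd_symm_apply, dif_pos i.2]
  have hfh : ∀ i : {l : Fin d // l ∉ S}, (e (g, h)) i.1 = h i := fun i => by
    rw [he]
    simp only [Equiv.piEquivPiSubtypeProd_symm_apply, dif_neg i.2]
  rw [mSet_eq_mSub S _ g hfg, mSet_compl_eq_mSub' S _ h hfh]
  have hx : (∏ l, x l ((e (g, h)) l)) = (∏ i : {l : Fin d // l ∈ S}, x i.1 (g i))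
      * ∏ i : {l : Fin d // l ∉ S}, x i.1 (h i) := by
    rw [← Finset.prod_mul_prod_compl S (fun l => x l ((e (g, h)) l))]
    congr 1
    · rw [← Finset.prod_coe_sort S (fun l => x l ((e (g, h)) l))]
      exact Finset.prod_congr rfl fun i _ => by rw [hfg i]
    · rw [Finset.prod_subtype Sᶜ (fun l => Finset.mem_compl)
        (fun l => x l ((e (g, h)) l))]
      exact Finset.prod_congr rfl fun i _ => by rw [hfh i]
  rw [hx]
  ring

end SubMono
section Main

variable {k : Type*} [Field k] {d : ℕ} {n : Fin d → ℕ}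

lemma prank_subset_rank (P : MultilinearMap k (fun i : Fin d => (Fin (n i) → k)) k) :
    tensorPRankSet (n := n) P ⊆ tensorRankSet (n := n) P := by
  rintro r ⟨J, Q, R, hJ, hsum⟩
  classical
  refine ⟨fun j => ∑ g : (i : {l : Fin d // l ∈ J j}) → Fin (n i.1),
      monomial (mSub (J j) g) (Q j (fun i => Pi.single (g i) 1)),
    fun j => ∑ g : (i : {l : Fin d // l ∉ J j}) → Fin (n i.1),
      monomial (mSub' (J j) g) (R j (fun i => Pi.single (g i) 1)), ?_, ?_⟩
  · intro j
    have hd1 : 1 ≤ d := by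
      obtain ⟨i0, _⟩ := (hJ j).1
      exact i0.pos
    have hcard : (J j).card < d := by
      have h1 : J j ⊂ Finset.univ := Finset.ssubset_univ_iff.mpr (hJ j).2
      have h2 := Finset.card_lt_card h1
      simpa using h2
    have hcard1 : 1 ≤ (J j).card := Finset.card_pos.mpr (hJ j).1
    constructor
    · refine lt_of_le_of_lt (MvPolynomial.totalDegree_finset_sum _ _) ?_
      rw [Finset.sup_lt_iff (show (⊥ : ℕ) < d from show (0 : ℕ) < d by omega)]
      intro g _
      refine lt_of_le_of_lt (MvPolynomial.totalDegree_monomial_le _ _) ?_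
      show ((mSub (n := n) (J j) g).sum fun _ e => e) < d
      rw [mSub_sum]
      exact hcard
    · refine lt_of_le_of_lt (MvPolynomial.totalDegree_finset_sum _ _) ?_
      rw [Finset.sup_lt_iff (show (⊥ : ℕ) < d from show (0 : ℕ) < d by omega)]
      intro g _
      refine lt_of_le_of_lt (MvPolynomial.totalDegree_monomial_le _ _) ?_
      show ((mSub' (n := n) (J j) g).sum fun _ e => e) < d
      rw [mSub'_sum]
      omega
  · intro x
    rw [hsum x]
    refine Finset.sum_congr rfl fun j _ => ?_
    have hQ : eval (fun p : (i : Fin d) × Fin (n i) => x p.1 p.2)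
        (∑ g : (i : {l : Fin d // l ∈ J j}) → Fin (n i.1),
          monomial (mSub (J j) g) (Q j (fun i => Pi.single (g i) 1)))
        = Q j (fun i => x i.1) := by
      rw [map_sum]
      simp_rw [eval_monomial, mSub_prod]
      rw [ml_expand (Q j) (fun i => x i.1)]
      exact Finset.sum_congr rfl fun g _ => mul_comm _ _
    have hR : eval (fun p : (i : Fin d) × Fin (n i) => x p.1 p.2)
        (∑ g : (i : {l : Fin d // l ∉ J j}) → Fin (n i.1),
          monomial (mSub' (J j) g) (R j (fun i => Pi.single (g i) 1)))
        = R j (fun i => x i.1) := by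
      rw [map_sum]
      simp_rw [eval_monomial, mSub'_prod]
      rw [ml_expand (R j) (fun i => x i.1)]
      exact Finset.sum_congr rfl fun g _ => mul_comm _ _
    rw [hQ, hR]

lemma rank_to_prank (hk : ∃ s : Finset k, d + 2 ≤ s.card)
    (P : MultilinearMap k (fun i : Fin d => (Fin (n i) → k)) k) {r : ℕ}
    (hr : r ∈ tensorRankSet (n := n) P) :
    ∃ r' ∈ tensorPRankSet (n := n) P, r' ≤ 4 ^ d * r := by
  classical
  obtain ⟨Q, R, hdeg, hsum⟩ := hr
  by_cases hd : 1 ≤ d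
  case neg =>
    have hd0 : d = 0 := by omega
    subst hd0
    have hP0 : ∀ x, P x = 0 := fun x => by
      rw [hsum x]
      exact Finset.sum_eq_zero fun j _ => absurd (hdeg j).1 (Nat.not_lt_zero _)
    exact ⟨0, ⟨Fin.elim0, fun j => j.elim0, fun j => j.elim0, fun j => j.elim0,
      fun x => by rw [hP0 x]; simp⟩, Nat.zero_le _⟩
  case pos =>
  set F := ∑ j, Q j * R j with hF
  have hdegF : F.totalDegree + 2 ≤ 2 * d := by
    have h1 : F.totalDegree ≤ 2 * d - 2 := by
      refine le_trans (MvPolynomial.totalDegree_finset_sum _ _) (Finset.sup_le fun j _ => ?_)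
      have h0 := MvPolynomial.totalDegree_mul (Q j) (R j)
      have h2 := (hdeg j).1
      have h3 := (hdeg j).2
      omega
    omega
  have hPF : ∀ x : (i : Fin d) → Fin (n i) → k,
      P x = eval (fun p : (i : Fin d) × Fin (n i) => x p.1 p.2) F := by
    intro x
    rw [hsum x, hF, map_sum]
    exact Finset.sum_congr rfl fun j _ => (map_mul _ _ _).symm
  set 𝒮 : Finset (Finset (Fin d)) :=
    Finset.univ.filter (fun S => S.Nonempty ∧ S ≠ Finset.univ) with hS
  have hmsum : ∀ f : (i : Fin d) → Fin (n i),
      (∑ p ∈ (mSet (n := n) Finset.univ f).support, mSet (n := n) Finset.univ f p) = d := by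
    intro f
    have h0 := mSet_sum (n := n) Finset.univ f
    rw [Finsupp.sum] at h0
    rw [h0]
    simp
  have hcoeff : ∀ f : (i : Fin d) → Fin (n i), coeff (mSet (n := n) Finset.univ f) F
      = ∑ j, ∑ S ∈ 𝒮, coeff (mSet S f) (Q j) * coeff (mSet Sᶜ f) (R j) := by
    intro f
    rw [hF, MvPolynomial.coeff_sum]
    refine Finset.sum_congr rfl fun j _ => ?_
    rw [coeff_mul_mSet]
    refine (Finset.sum_subset (Finset.subset_univ 𝒮) fun S _ hS' => ?_).symm
    rw [hS, Finset.mem_filter, not_and, not_and_or] at hS'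
    rcases hS' (Finset.mem_univ S) with h1 | h2
    · have hSe : S = ∅ := by
        rw [Finset.not_nonempty_iff_eq_empty] at h1
        exact h1
      subst hSe
      rw [Finset.compl_empty]
      have : coeff (mSet (n := n) Finset.univ f) (R j) = 0 := by
        apply MvPolynomial.coeff_eq_zero_of_totalDegree_lt
        rw [hmsum f]
        exact (hdeg j).2
      rw [this, mul_zero]
    · rw [not_not] at h2
      subst h2
      have : coeff (mSet (n := n) Finset.univ f) (Q j) = 0 := by
        apply MvPolynomial.coeff_eq_zero_of_totalDegree_lt
        rw [hmsum f]
        exact (hdeg j).1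
      rw [this, zero_mul]
  have hkey : ∀ x : (i : Fin d) → Fin (n i) → k,
      P x = ∑ j, ∑ S ∈ 𝒮,
        (mlOfCoeff (fun i : {l : Fin d // l ∈ S} => n i.1)
          (fun g => coeff (mSub S g) (Q j)) (fun i => x i.1))
        * (mlOfCoeff (fun i : {l : Fin d // l ∉ S} => n i.1)
          (fun g => coeff (mSub' S g) (R j)) (fun i => x i.1)) := by
    intro x
    rw [extract_ml hd hk P F hdegF hPF x]
    simp_rw [hcoeff, Finset.mul_sum]
    rw [Finset.sum_comm]
    refine Finset.sum_congr rfl fun j _ => ?_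
    rw [Finset.sum_comm]
    refine Finset.sum_congr rfl fun S _ => ?_
    rw [← sum_factor]
  have hcard : Fintype.card (Fin r × {S : Finset (Fin d) // S ∈ 𝒮}) = r * 𝒮.card := by
    simp [Fintype.card_coe]
  set e := (Fintype.equivFinOfCardEq hcard).symm with he
  refine ⟨r * 𝒮.card, ⟨fun j' => ((e j').2 : Finset (Fin d)),
    fun j' => mlOfCoeff _ (fun g => coeff (mSub ((e j').2 : Finset (Fin d)) g) (Q (e j').1)),
    fun j' => mlOfCoeff _ (fun g => coeff (mSub' ((e j').2 : Finset (Fin d)) g) (R (e j').1)),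
    ?_, ?_⟩, ?_⟩
  · intro j'
    have h0 : ((e j').2 : Finset (Fin d)) ∈ Finset.univ.filter
        (fun S : Finset (Fin d) => S.Nonempty ∧ S ≠ Finset.univ) := (e j').2.2
    have h1 := (Finset.mem_filter.mp h0).2
    exact h1
  · intro x
    rw [hkey x]
    have body : Fin r → (S : Finset (Fin d)) → k := fun j S =>
      (mlOfCoeff (fun i : {l : Fin d // l ∈ S} => n i.1)
        (fun g => coeff (mSub S g) (Q j)) (fun i => x i.1))
      * (mlOfCoeff (fun i : {l : Fin d // l ∉ S} => n i.1)
        (fun g => coeff (mSub' S g) (R j)) (fun i => x i.1))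
    calc (∑ j, ∑ S ∈ 𝒮,
          (mlOfCoeff (fun i : {l : Fin d // l ∈ S} => n i.1)
            (fun g => coeff (mSub S g) (Q j)) (fun i => x i.1))
          * (mlOfCoeff (fun i : {l : Fin d // l ∉ S} => n i.1)
            (fun g => coeff (mSub' S g) (R j)) (fun i => x i.1)))
        = ∑ p : Fin r × {S : Finset (Fin d) // S ∈ 𝒮},
            (mlOfCoeff (fun i : {l : Fin d // l ∈ (p.2 : Finset (Fin d))} => n i.1)
              (fun g => coeff (mSub (p.2 : Finset (Fin d)) g) (Q p.1)) (fun i => x i.1))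
            * (mlOfCoeff (fun i : {l : Fin d // l ∉ (p.2 : Finset (Fin d))} => n i.1)
              (fun g => coeff (mSub' (p.2 : Finset (Fin d)) g) (R p.1)) (fun i => x i.1)) := by
          rw [Fintype.sum_prod_type]
          refine Finset.sum_congr rfl fun j _ => ?_
          exact (Finset.sum_coe_sort 𝒮 (fun S =>
            (mlOfCoeff (fun i : {l : Fin d // l ∈ S} => n i.1)
              (fun g => coeff (mSub S g) (Q j)) (fun i => x i.1))
            * (mlOfCoeff (fun i : {l : Fin d // l ∉ S} => n i.1)
              (fun g => coeff (mSub' S g) (R j)) (fun i => x i.1)))).symm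
      _ = ∑ j' : Fin (r * 𝒮.card),
            (mlOfCoeff (fun i : {l : Fin d // l ∈ ((e j').2 : Finset (Fin d))} => n i.1)
              (fun g => coeff (mSub ((e j').2 : Finset (Fin d)) g) (Q (e j').1))
              (fun i => x i.1))
            * (mlOfCoeff (fun i : {l : Fin d // l ∉ ((e j').2 : Finset (Fin d))} => n i.1)
              (fun g => coeff (mSub' ((e j').2 : Finset (Fin d)) g) (R (e j').1))
              (fun i => x i.1)) := by
          exact (Equiv.sum_comp e (fun p : Fin r × {S : Finset (Fin d) // S ∈ 𝒮} =>
            (mlOfCoeff (fun i : {l : Fin d // l ∈ (p.2 : Finset (Fin d))} => n i.1)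
              (fun g => coeff (mSub (p.2 : Finset (Fin d)) g) (Q p.1)) (fun i => x i.1))
            * (mlOfCoeff (fun i : {l : Fin d // l ∉ (p.2 : Finset (Fin d))} => n i.1)
              (fun g => coeff (mSub' (p.2 : Finset (Fin d)) g) (R p.1))
              (fun i => x i.1)))).symm
  · have h1 : 𝒮.card ≤ 2 ^ d := by
      calc 𝒮.card ≤ (Finset.univ : Finset (Finset (Fin d))).card := Finset.card_filter_le _ _
        _ = 2 ^ d := by rw [Finset.card_univ, Fintype.card_finset, Fintype.card_fin]
    calc r * 𝒮.card ≤ r * 2 ^ d := Nat.mul_le_mul_left _ h1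
      _ ≤ 4 ^ d * r := by
          rw [mul_comm]
          exact Nat.mul_le_mul_right _ (Nat.pow_le_pow_left (by norm_num) d)

end Main

/-- For a `d`-tensor `P : V₁ × ⋯ × V_d → k` over a field with
`|k| ≥ d+2`, the rank and partition rank satisfy `r(P) ≤ pr(P) ≤ 4^d · r(P)`. -/
theorem stmt8 (hk : ∃ s : Finset k, d + 2 ≤ s.card)
    (P : MultilinearMap k (fun i : Fin d => (Fin (n i) → k)) k) :
    sInf (tensorRankSet P) ≤ sInf (tensorPRankSet P) ∧
    sInf (tensorPRankSet P) ≤ 4 ^ d * sInf (tensorRankSet P) := by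
  constructor
  · by_cases hpr : (tensorPRankSet (n := n) P).Nonempty
    · exact Nat.sInf_le (prank_subset_rank P (Nat.sInf_mem hpr))
    · rw [Set.not_nonempty_iff_eq_empty.mp hpr, Nat.sInf_empty]
      by_contra hlt
      have hne : (tensorRankSet (n := n) P).Nonempty := by
        by_contra h2
        rw [Set.not_nonempty_iff_eq_empty.mp h2, Nat.sInf_empty] at hlt
        exact hlt (le_refl 0)
      obtain ⟨r, hr⟩ := hne
      obtain ⟨r', hr', -⟩ := rank_to_prank hk P hr
      rw [Set.not_nonempty_iff_eq_empty.mp hpr] at hr'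
      exact hr'
  · by_cases hrk : (tensorRankSet (n := n) P).Nonempty
    · obtain ⟨r', hr', hle⟩ := rank_to_prank hk P (Nat.sInf_mem hrk)
      exact le_trans (Nat.sInf_le hr') hle
    · have hpr : tensorPRankSet (n := n) P = ∅ := by
        rw [Set.eq_empty_iff_forall_notMem]
        intro r hr
        exact hrk ⟨r, prank_subset_rank P hr⟩
      rw [hpr, Nat.sInf_empty]
      exact Nat.zero_le _
end
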